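/- arXiv:1811.03249 — 3 statements merged into one kernel-verified Lean document; each statement's English description precedes it below -/
import Mathlib

section
/- Suppose $u \in L^1_{uloc}(\mathbb{R}^3)$ satisfies $\lim_{|x_0| \to \infty} \int_{Q_1(x_0)} |u - (u)_{Q_1(x_0)}|\,dx = 0$. Then for every $r > 0$ (including $r > 1$), $\lim_{|x_0| \to \infty} \int_{Q_r(x_0)} |u - (u)_{Q_r(x_0)}|\,dx = 0$. -/
open MeasureTheory Metric Filter

noncomputable section

/-- Open cube in `ℝ³` centered at `x` with side length `2r`. -/
def cube (x : EuclideanSpace ℝ (Fin 3)) (r : ℝ) : Set (EuclideanSpace ℝ (Fin 3)) :=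
  {y | ∀ i, |y i - x i| < r}

namespace OscDecayAux

abbrev E3 := EuclideanSpace ℝ (Fin 3)

lemma abs_coord_le_dist (x y : E3) (i : Fin 3) : |y i - x i| ≤ dist y x := by
  rw [EuclideanSpace.dist_eq, ← Real.sqrt_sq_eq_abs]
  apply Real.sqrt_le_sqrt
  simp only [Real.dist_eq]
  calc (y i - x i)^2 = |y i - x i|^2 := (sq_abs _).symm
    _ ≤ ∑ j, |y j - x j|^2 := Finset.single_le_sum (f := fun j => |y j - x j|^2)
        (fun j _ => sq_nonneg _) (Finset.mem_univ i)

lemma ball_subset_cube (x : E3) (r : ℝ) : ball x r ⊆ cube x r := by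
  intro y hy i
  exact lt_of_le_of_lt (abs_coord_le_dist x y i) hy

lemma cube_subset_closedBall (x : E3) (r : ℝ) (hr : 0 ≤ r) : cube x r ⊆ closedBall x (2*r) := by
  intro y hy
  have h : dist y x ≤ Real.sqrt (3 * r^2) := by
    rw [EuclideanSpace.dist_eq]
    apply Real.sqrt_le_sqrt
    simp only [Real.dist_eq]
    have : ∀ i : Fin 3, |y i - x i|^2 ≤ r^2 := fun i =>
      pow_le_pow_left₀ (abs_nonneg _) (le_of_lt (hy i)) 2
    calc (∑ i, |y i - x i|^2) ≤ ∑ _i : Fin 3, r^2 := Finset.sum_le_sum (fun i _ => this i)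
      _ = 3 * r^2 := by simp [Finset.sum_const]
  rw [mem_closedBall]
  refine le_trans h ?_
  calc Real.sqrt (3*r^2) ≤ Real.sqrt ((2*r)^2) := Real.sqrt_le_sqrt (by nlinarith)
    _ = 2*r := Real.sqrt_sq (by positivity)

lemma isOpen_cube (x : E3) (r : ℝ) : IsOpen (cube x r) := by
  have : cube x r = ⋂ i : Fin 3, (fun y : E3 => y i) ⁻¹' (Metric.ball (x i) r) := by
    ext y; simp [cube, Real.dist_eq]
  rw [this]
  exact isOpen_iInter_of_finite fun i =>
    (isOpen_ball).preimage (EuclideanSpace.proj i).cont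

lemma measurableSet_cube (x : E3) (r : ℝ) : MeasurableSet (cube x r) :=
  (isOpen_cube x r).measurableSet

lemma volume_cube_pos (x : E3) {r : ℝ} (hr : 0 < r) : 0 < volume (cube x r) :=
  lt_of_lt_of_le (measure_ball_pos volume x hr) (measure_mono (ball_subset_cube x r))

lemma volume_cube_lt_top (x : E3) (r : ℝ) : volume (cube x r) < ⊤ := by
  rcases le_or_gt r 0 with h | h
  · have : cube x r = ∅ := by
      ext y; simp only [cube, Set.mem_setOf_eq, Set.mem_empty_iff_false, iff_false]
      push_neg; exact ⟨0, le_trans h (abs_nonneg _)⟩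
    simp [this]
  · exact lt_of_le_of_lt (measure_mono (cube_subset_closedBall x r h.le))
      (measure_closedBall_lt_top)

lemma integrableOn_cube {u : E3 → ℝ} (hu : LocallyIntegrable u volume) (x : E3) (r : ℝ) :
    IntegrableOn u (cube x r) volume := by
  rcases le_or_gt r 0 with h | h
  · have : cube x r = ∅ := by
      ext y; simp only [cube, Set.mem_setOf_eq, Set.mem_empty_iff_false, iff_false]
      push_neg; exact ⟨0, le_trans h (abs_nonneg _)⟩
    simp [this, IntegrableOn]
  · exact (hu.integrableOn_isCompact (isCompact_closedBall x (2*r))).mono_set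
      (cube_subset_closedBall x r h.le)

lemma volume_cube_eq (x : E3) (r : ℝ) : volume (cube x r) = volume (cube (0:E3) r) := by
  have h : cube x r = (fun y : E3 => y + (-x)) ⁻¹' cube (0:E3) r := by
    ext y
    simp only [cube, Set.mem_setOf_eq, Set.mem_preimage]
    constructor <;> intro h i <;> have := h i <;>
      simpa [PiLp.add_apply, PiLp.neg_apply, sub_eq_add_neg] using this
  rw [h, measure_preimage_add_right]

variable {u : E3 → ℝ}

lemma oscA {Q : Set E3} (hQ : MeasurableSet Q)
    (hfin : volume Q < ⊤) (hi : IntegrableOn u Q volume) (c : ℝ) :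
    ∫ y in Q, |u y - ⨍ z in Q, u z| ≤ 2 * ∫ y in Q, |u y - c| := by
  set m := (volume Q).toReal with hm
  set a := ⨍ z in Q, u z with ha
  have hconst : IntegrableOn (fun _ : E3 => c) Q volume :=
    integrableOn_const (hfin).ne
  have h1 : IntegrableOn (fun y => |u y - c|) Q volume := (hi.sub hconst).abs
  have h2 : IntegrableOn (fun y => |u y - a|) Q volume :=
    (hi.sub (integrableOn_const (hfin).ne)).abs
  have key : m * |a - c| ≤ ∫ y in Q, |u y - c| := by
    rcases eq_or_lt_of_le (ENNReal.toReal_nonneg : (0:ℝ) ≤ m) with h0 | h0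
    · rw [hm, ← h0, zero_mul]
      exact setIntegral_nonneg hQ (fun y _ => abs_nonneg _)
    · have hint : ∫ y in Q, (u y - c) = (∫ y in Q, u y) - m * c := by
        rw [integral_sub hi hconst, setIntegral_const]; simp [hm, Measure.real]
      have habs : |∫ y in Q, (u y - c)| ≤ ∫ y in Q, |u y - c| := by
        simpa [Real.norm_eq_abs] using
          norm_integral_le_integral_norm (μ := volume.restrict Q) (f := fun y => u y - c)
      have haeq : a = m⁻¹ * ∫ y in Q, u y := by
        rw [ha, setAverage_eq]; simp [hm, smul_eq_mul, Measure.real]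
      have : a - c = m⁻¹ * ((∫ y in Q, u y) - m * c) := by
        rw [haeq]; have hm0 : m ≠ 0 := h0.ne'; field_simp
      rw [this, abs_mul, abs_inv, abs_of_pos h0]
      rw [← hint] at *
      calc m * (m⁻¹ * |∫ y in Q, (u y - c)|) = |∫ y in Q, (u y - c)| := by have hm0 : m ≠ 0 := h0.ne'; field_simp
        _ ≤ _ := habs
  have hpt : ∀ y, |u y - a| ≤ |u y - c| + |a - c| := by
    intro y
    calc |u y - a| ≤ |u y - c| + |c - a| := abs_sub_le _ _ _
      _ = |u y - c| + |a - c| := by rw [abs_sub_comm c a]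
  calc ∫ y in Q, |u y - a| ≤ ∫ y in Q, (|u y - c| + |a - c|) := by
        apply integral_mono h2 (h1.add (integrableOn_const (hfin).ne)) hpt
    _ = (∫ y in Q, |u y - c|) + m * |a - c| := by
        rw [integral_add h1 (integrableOn_const (hfin).ne), setIntegral_const]
        simp [hm, smul_eq_mul, Measure.real]
    _ ≤ (∫ y in Q, |u y - c|) + ∫ y in Q, |u y - c| := by linarith [key]
    _ = 2 * ∫ y in Q, |u y - c| := by ring

lemma avg_diff {A B S : Set E3}
    (hSA : S ⊆ A) (hSB : S ⊆ B)
    (hAfin : volume A < ⊤) (hBfin : volume B < ⊤) (hSpos : 0 < volume S)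
    (hiA : IntegrableOn u A volume) (hiB : IntegrableOn u B volume) :
    |(⨍ z in A, u z) - ⨍ z in B, u z| ≤
      ((∫ y in A, |u y - ⨍ z in A, u z|) + ∫ y in B, |u y - ⨍ z in B, u z|) /
        (volume S).toReal := by
  set a := ⨍ z in A, u z
  set b := ⨍ z in B, u z
  have hSfin : volume S < ⊤ := lt_of_le_of_lt (measure_mono hSA) hAfin
  have hms : 0 < (volume S).toReal := ENNReal.toReal_pos hSpos.ne' hSfin.ne
  have haA : IntegrableOn (fun y => |u y - a|) A volume :=
    (hiA.sub (integrableOn_const (hAfin).ne)).abs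
  have hbB : IntegrableOn (fun y => |u y - b|) B volume :=
    (hiB.sub (integrableOn_const (hBfin).ne)).abs
  have hiSa : IntegrableOn (fun y => |u y - a|) S volume := haA.mono_set hSA
  have hiSb : IntegrableOn (fun y => |u y - b|) S volume := hbB.mono_set hSB
  have key : (volume S).toReal * |a - b| ≤
      (∫ y in S, |u y - a|) + ∫ y in S, |u y - b| := by
    have hpt : ∀ y, |a - b| ≤ |u y - a| + |u y - b| := by
      intro y
      calc |a - b| ≤ |a - u y| + |u y - b| := abs_sub_le _ _ _
        _ = |u y - a| + |u y - b| := by rw [abs_sub_comm]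
    calc (volume S).toReal * |a - b| = ∫ _y in S, |a - b| := by
          rw [setIntegral_const]; simp [smul_eq_mul, Measure.real]
      _ ≤ ∫ y in S, (|u y - a| + |u y - b|) := by
          apply integral_mono (integrableOn_const (hSfin).ne : IntegrableOn (fun _ => |a - b|) S volume) (hiSa.add hiSb)
            (fun y => hpt y)
      _ = _ := integral_add hiSa hiSb
  have h1 : (∫ y in S, |u y - a|) ≤ ∫ y in A, |u y - a| :=
    setIntegral_mono_set haA
      (Filter.Eventually.of_forall (fun y => abs_nonneg _)) (HasSubset.Subset.eventuallyLE hSA)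
  have h2 : (∫ y in S, |u y - b|) ≤ ∫ y in B, |u y - b| :=
    setIntegral_mono_set hbB
      (Filter.Eventually.of_forall (fun y => abs_nonneg _)) (HasSubset.Subset.eventuallyLE hSB)
  rw [le_div_iff₀ hms]
  calc |a - b| * (volume S).toReal = (volume S).toReal * |a - b| := mul_comm _ _
    _ ≤ (∫ y in S, |u y - a|) + ∫ y in S, |u y - b| := key
    _ ≤ _ := add_le_add h1 h2

def shift (r : ℝ) (b : Fin 3 → Bool) : E3 :=
  WithLp.toLp 2 (fun i => if b i then r/2 else -(r/2))

lemma shift_apply (r : ℝ) (b : Fin 3 → Bool) (x : E3) (i : Fin 3) :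
    (x + shift r b) i = x i + (if b i then r/2 else -(r/2)) := rfl

lemma cube_cover {x y : E3} {r : ℝ} (hr : 0 < r)
    (hy : y ∈ cube x (3*r/2)) :
    y ∈ cube (x + shift r (fun i => decide (0 ≤ y i - x i))) r := by
  intro i
  have h := hy i
  rw [shift_apply]
  rcases le_or_gt 0 (y i - x i) with h0 | h0
  · rw [if_pos (decide_eq_true h0)]
    rw [abs_lt] at h ⊢
    constructor <;> [linarith; linarith [h.2]]
  · rw [if_neg (by simp only [decide_eq_true_eq]; exact not_le.2 h0)]
    rw [abs_lt] at h ⊢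
    constructor <;> [linarith [h.1]; linarith]

lemma cover_sum (x : E3) {r : ℝ} (hr : 0 < r) (c : ℝ)
    (hi : ∀ z : E3, ∀ ρ : ℝ, IntegrableOn (fun y => |u y - c|) (cube z ρ) volume) :
    ∫ y in cube x (3*r/2), |u y - c| ≤
      ∑ b : Fin 3 → Bool, ∫ y in cube (x + shift r b) r, |u y - c| := by
  set f : E3 → ℝ := fun y => |u y - c| with hf
  have hf0 : ∀ y, 0 ≤ f y := fun y => abs_nonneg _
  have hind : ∀ b : Fin 3 → Bool, Integrable ((cube (x + shift r b) r).indicator f) volume :=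
    fun b => (hi _ _).integrable_indicator (measurableSet_cube _ _)
  have hindB : Integrable ((cube x (3*r/2)).indicator f) volume :=
    (hi _ _).integrable_indicator (measurableSet_cube _ _)
  have hpt : ∀ y, (cube x (3*r/2)).indicator f y ≤
      ∑ b : Fin 3 → Bool, (cube (x + shift r b) r).indicator f y := by
    intro y
    by_cases hy : y ∈ cube x (3*r/2)
    · rw [Set.indicator_of_mem hy]
      calc f y = (cube (x + shift r (fun i => decide (0 ≤ y i - x i))) r).indicator f y := by
            rw [Set.indicator_of_mem (cube_cover hr hy)]
        _ ≤ _ := Finset.single_le_sum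
            (f := fun b => (cube (x + shift r b) r).indicator f y)
            (fun b _ => Set.indicator_nonneg (fun z _ => hf0 z) y) (Finset.mem_univ _)
    · rw [Set.indicator_of_notMem hy]
      exact Finset.sum_nonneg fun b _ => Set.indicator_nonneg (fun z _ => hf0 z) y
  calc ∫ y in cube x (3*r/2), f y = ∫ y, (cube x (3*r/2)).indicator f y := by
        rw [integral_indicator (measurableSet_cube _ _)]
    _ ≤ ∫ y, ∑ b : Fin 3 → Bool, (cube (x + shift r b) r).indicator f y :=
        integral_mono hindB (integrable_finset_sum _ (fun b _ => hind b)) hpt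
    _ = ∑ b : Fin 3 → Bool, ∫ y, (cube (x + shift r b) r).indicator f y :=
        integral_finset_sum _ (fun b _ => hind b)
    _ = ∑ b : Fin 3 → Bool, ∫ y in cube (x + shift r b) r, f y := by
        refine Finset.sum_congr rfl fun b _ => ?_
        rw [integral_indicator (measurableSet_cube _ _)]

lemma small_cube_subset_left {x : E3} {r : ℝ} (hr : 0 < r) (b : Fin 3 → Bool) :
    cube (x + shift (r/2) b) (r/4) ⊆ cube (x + shift r b) r := by
  intro y hy i
  have h := hy i
  rw [shift_apply] at h ⊢
  split_ifs at h ⊢ with hb <;>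
    (rw [abs_lt] at h ⊢; constructor <;> [linarith [h.1]; linarith [h.2]])

lemma small_cube_subset_right {x : E3} {r : ℝ} (hr : 0 < r) (b : Fin 3 → Bool) :
    cube (x + shift (r/2) b) (r/4) ⊆ cube x r := by
  intro y hy i
  have h := hy i
  rw [shift_apply] at h
  split_ifs at h with hb <;>
    (rw [abs_lt] at h ⊢; constructor <;> [linarith [h.1]; linarith [h.2]])

/-- The oscillation functional. -/
def osc (u : E3 → ℝ) (x : E3) (r : ℝ) : ℝ :=
  ∫ y in cube x r, |u y - ⨍ z in cube x r, u z|

lemma osc_nonneg (u : E3 → ℝ) (x : E3) (r : ℝ) : 0 ≤ osc u x r :=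
  setIntegral_nonneg (measurableSet_cube _ _) (fun y _ => abs_nonneg _)

lemma tendsto_translate {f : E3 → ℝ} (h : Tendsto f (cocompact E3) (nhds 0)) (s : E3) :
    Tendsto (fun x => f (x + s)) (cocompact E3) (nhds 0) :=
  h.comp ((Homeomorph.addRight s).map_cocompact.le)

lemma down (hu : LocallyIntegrable u volume) {r' r : ℝ} (h0 : 0 < r') (hle : r' ≤ r)
    (hP : Tendsto (fun x0 => osc u x0 r) (cocompact E3) (nhds 0)) :
    Tendsto (fun x0 => osc u x0 r') (cocompact E3) (nhds 0) := by
  have hsub : ∀ x : E3, cube x r' ⊆ cube x r := fun x y hy i =>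
    lt_of_lt_of_le (hy i) hle
  have hbd : ∀ x : E3, osc u x r' ≤ 2 * osc u x r := by
    intro x
    set a := ⨍ z in cube x r, u z
    have habs : IntegrableOn (fun y => |u y - a|) (cube x r) volume :=
      ((integrableOn_cube hu x r).sub
        (integrableOn_const ((volume_cube_lt_top x r)).ne)).abs
    calc osc u x r' ≤ 2 * ∫ y in cube x r', |u y - a| :=
          oscA (measurableSet_cube _ _)
            (lt_of_le_of_lt (measure_mono (hsub x)) (volume_cube_lt_top x r))
            ((integrableOn_cube hu x r).mono_set (hsub x)) a
      _ ≤ 2 * ∫ y in cube x r, |u y - a| := by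
          have := setIntegral_mono_set habs
            (Filter.Eventually.of_forall (fun y => abs_nonneg _))
            (HasSubset.Subset.eventuallyLE (hsub x))
          linarith
      _ = 2 * osc u x r := rfl
  have h2 : Tendsto (fun x => 2 * osc u x r) (cocompact E3) (nhds 0) := by
    have := hP.const_mul 2
    simpa using this
  exact squeeze_zero (fun x => osc_nonneg u x r') hbd h2

lemma up (hu : LocallyIntegrable u volume) {r : ℝ} (hr : 0 < r)
    (hP : Tendsto (fun x0 => osc u x0 r) (cocompact E3) (nhds 0)) :
    Tendsto (fun x0 => osc u x0 (3*r/2)) (cocompact E3) (nhds 0) := by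
  set m := (volume (cube (0:E3) r)).toReal with hmdef
  set κ := (volume (cube (0:E3) (r/4))).toReal with hκdef
  have hm0 : 0 ≤ m := ENNReal.toReal_nonneg
  have hκ0 : 0 < κ := ENNReal.toReal_pos (volume_cube_pos _ (by linarith)).ne'
    (volume_cube_lt_top _ _).ne
  have hbd : ∀ x : E3, osc u x (3*r/2) ≤ ∑ b : Fin 3 → Bool,
      (2 * osc u (x + shift r b) r + (2*m/κ) * (osc u (x + shift r b) r + osc u x r)) := by
    intro x
    set a := ⨍ z in cube x r, u z with ha
    have hiabs : ∀ z : E3, ∀ ρ : ℝ,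
        IntegrableOn (fun y => |u y - a|) (cube z ρ) volume := fun z ρ =>
      ((integrableOn_cube hu z ρ).sub
        (integrableOn_const ((volume_cube_lt_top z ρ)).ne)).abs
    have step1 : osc u x (3*r/2) ≤ 2 * ∫ y in cube x (3*r/2), |u y - a| :=
      oscA (measurableSet_cube _ _) (volume_cube_lt_top _ _)
        (integrableOn_cube hu _ _) a
    have step2 : ∫ y in cube x (3*r/2), |u y - a| ≤
        ∑ b : Fin 3 → Bool, ∫ y in cube (x + shift r b) r, |u y - a| :=
      cover_sum x hr a hiabs
    have step3 : ∀ b : Fin 3 → Bool,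
        ∫ y in cube (x + shift r b) r, |u y - a| ≤
          osc u (x + shift r b) r + m * ((osc u (x + shift r b) r + osc u x r) / κ) := by
      intro b
      set Qb := cube (x + shift r b) r with hQb
      set ab := ⨍ z in Qb, u z with hab
      have hQbfin : volume Qb < ⊤ := volume_cube_lt_top _ _
      have hQbm : (volume Qb).toReal = m := by rw [hQb, volume_cube_eq]
      have hiQb : IntegrableOn u Qb volume := integrableOn_cube hu _ _
      have hiQbab : IntegrableOn (fun y => |u y - ab|) Qb volume :=
        (hiQb.sub (integrableOn_const (hQbfin).ne)).abs
      have hpt : ∀ y, |u y - a| ≤ |u y - ab| + |ab - a| := fun y =>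
        abs_sub_le (u y) ab a
      have tri : ∫ y in Qb, |u y - a| ≤
          (∫ y in Qb, |u y - ab|) + m * |ab - a| := by
        calc ∫ y in Qb, |u y - a| ≤ ∫ y in Qb, (|u y - ab| + |ab - a|) :=
              integral_mono (hiabs _ _)
                (hiQbab.add (integrableOn_const (hQbfin).ne)) hpt
          _ = (∫ y in Qb, |u y - ab|) + (volume Qb).toReal * |ab - a| := by
              rw [integral_add hiQbab (integrableOn_const (hQbfin).ne),
                setIntegral_const]
              simp [smul_eq_mul, Measure.real]
          _ = (∫ y in Qb, |u y - ab|) + m * |ab - a| := by rw [hQbm]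
      have hdiff : |ab - a| ≤ (osc u (x + shift r b) r + osc u x r) / κ := by
        have hSvol : (volume (cube (x + shift (r/2) b) (r/4))).toReal = κ := by
          rw [volume_cube_eq]
        have := avg_diff (u := u)
          (small_cube_subset_left hr b) (small_cube_subset_right hr b)
          hQbfin (volume_cube_lt_top x r)
          (volume_cube_pos _ (by linarith : (0:ℝ) < r/4))
          hiQb (integrableOn_cube hu x r)
        rw [hSvol] at this
        exact this
      calc ∫ y in Qb, |u y - a| ≤ (∫ y in Qb, |u y - ab|) + m * |ab - a| := tri
        _ ≤ osc u (x + shift r b) r + m * ((osc u (x + shift r b) r + osc u x r) / κ) := by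
            have : (∫ y in Qb, |u y - ab|) = osc u (x + shift r b) r := rfl
            rw [this]
            exact (add_le_add_iff_left _).2 (mul_le_mul_of_nonneg_left hdiff hm0)
    calc osc u x (3*r/2) ≤ 2 * ∫ y in cube x (3*r/2), |u y - a| := step1
      _ ≤ 2 * ∑ b : Fin 3 → Bool, ∫ y in cube (x + shift r b) r, |u y - a| := by
          linarith [step2]
      _ ≤ 2 * ∑ b : Fin 3 → Bool,
            (osc u (x + shift r b) r + m * ((osc u (x + shift r b) r + osc u x r) / κ)) := by
          have := Finset.sum_le_sum (fun b (_ : b ∈ Finset.univ) => step3 b)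
          linarith
      _ = ∑ b : Fin 3 → Bool,
            (2 * osc u (x + shift r b) r + (2*m/κ) * (osc u (x + shift r b) r + osc u x r)) := by
          rw [Finset.mul_sum]
          refine Finset.sum_congr rfl fun b _ => ?_
          field_simp
  have hGt : Tendsto (fun x => ∑ b : Fin 3 → Bool,
      (2 * osc u (x + shift r b) r + (2*m/κ) * (osc u (x + shift r b) r + osc u x r)))
      (cocompact E3) (nhds 0) := by
    have hsum : Tendsto (fun x => ∑ b : Fin 3 → Bool,
        (2 * osc u (x + shift r b) r + (2*m/κ) * (osc u (x + shift r b) r + osc u x r)))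
        (cocompact E3)
        (nhds (∑ _b : Fin 3 → Bool, (2 * (0:ℝ) + (2*m/κ) * (0 + 0)))) := by
      apply tendsto_finset_sum
      intro b _
      exact ((tendsto_translate hP (shift r b)).const_mul 2).add
        (((tendsto_translate hP (shift r b)).add hP).const_mul (2*m/κ))
    simpa using hsum
  exact squeeze_zero (fun x => osc_nonneg u x _) hbd hGt

end OscDecayAux

open OscDecayAux in
/-- If `u ∈ L¹_uloc(ℝ³)` has decaying mean oscillation over unit cubes, then its
mean oscillation over cubes of any radius `r > 0` (including `r > 1`) also decays at spatial infinity. -/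
theorem oscillation_decay_all_cubes
    (u : EuclideanSpace ℝ (Fin 3) → ℝ) (hu : LocallyIntegrable u volume)
    (huloc : ∃ M : ℝ, ∀ z : EuclideanSpace ℝ (Fin 3), ∫ y in ball z 1, |u y| ≤ M)
    (hosc : Tendsto (fun x0 : EuclideanSpace ℝ (Fin 3) =>
        ∫ y in cube x0 1, |u y - ⨍ z in cube x0 1, u z|)
      (cocompact (EuclideanSpace ℝ (Fin 3))) (nhds 0))
    (r : ℝ) (hr0 : 0 < r) :
    Tendsto (fun x0 : EuclideanSpace ℝ (Fin 3) =>
        ∫ y in cube x0 r, |u y - ⨍ z in cube x0 r, u z|)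
      (cocompact (EuclideanSpace ℝ (Fin 3))) (nhds 0) := by
  have hpow : ∀ n : ℕ, Tendsto (fun x0 => osc u x0 ((3/2:ℝ)^n))
      (cocompact E3) (nhds 0) := by
    intro n
    induction n with
    | zero => simpa [osc] using hosc
    | succ n ih =>
        have h15 : (0:ℝ) < (3/2:ℝ)^n := by positivity
        have := up hu h15 ih
        have heq : 3 * (3/2:ℝ)^n / 2 = (3/2:ℝ)^(n+1) := by ring
        rwa [heq] at this
  obtain ⟨n, hn⟩ : ∃ n : ℕ, r < (3/2:ℝ)^n := pow_unbounded_of_one_lt r (by norm_num)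
  exact down hu hr0 hn.le (hpow n)
end
end

section
/- Suppose $u \in L^1_{uloc}(\mathbb{R}^3)$ satisfies $\lim_{|x_0| \to \infty} \int_{Q_1(x_0)} |u - (u)_{Q_1(x_0)}|\,dx = 0$. Then for every $r > 0$, $\lim_{|x_0| \to \infty} \sup_{y \in \overline{Q_{2r}(x_0)}} |(u)_{Q_r(y)} - (u)_{Q_r(x_0)}| = 0$. -/
open MeasureTheory Metric Filter

noncomputable section

/-- Closed cube in `ℝ³` centered at `x` with side length `2r`. -/
def closedCube (x : EuclideanSpace ℝ (Fin 3)) (r : ℝ) : Set (EuclideanSpace ℝ (Fin 3)) :=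
  {y | ∀ i, |y i - x i| ≤ r}

namespace AvgDecay

local notation "E3" => EuclideanSpace ℝ (Fin 3)

lemma cube_eq_preimage (x : E3) (r : ℝ) :
    cube x r = ((MeasurableEquiv.toLp 2 (Fin 3 → ℝ)).symm) ⁻¹'
      (Set.pi Set.univ fun i => Set.Ioo (x i - r) (x i + r)) := by
  ext y
  simp only [cube, Set.mem_setOf_eq, Set.mem_preimage, Set.mem_pi, Set.mem_univ,
    Set.mem_Ioo, forall_true_left]
  have he : ∀ i, ((MeasurableEquiv.toLp 2 (Fin 3 → ℝ)).symm) y i = y i := fun i => rfl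
  simp only [he]
  constructor
  · intro h i; have := abs_lt.1 (h i); constructor <;> linarith [this.1, this.2]
  · intro h i; rw [abs_lt]; have := h i; constructor <;> linarith [this.1, this.2]

lemma closedCube_eq_preimage (x : E3) (r : ℝ) :
    closedCube x r = ((MeasurableEquiv.toLp 2 (Fin 3 → ℝ)).symm) ⁻¹'
      (Set.pi Set.univ fun i => Set.Icc (x i - r) (x i + r)) := by
  ext y
  simp only [closedCube, Set.mem_setOf_eq, Set.mem_preimage, Set.mem_pi, Set.mem_univ,
    Set.mem_Icc, forall_true_left]
  have he : ∀ i, ((MeasurableEquiv.toLp 2 (Fin 3 → ℝ)).symm) y i = y i := fun i => rfl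
  simp only [he]
  constructor
  · intro h i; have := abs_le.1 (h i); constructor <;> linarith [this.1, this.2]
  · intro h i; rw [abs_le]; have := h i; constructor <;> linarith [this.1, this.2]

lemma measurableSet_cube (x : E3) (r : ℝ) : MeasurableSet (cube x r) := by
  rw [cube_eq_preimage]
  exact ((MeasurableEquiv.toLp 2 (Fin 3 → ℝ)).symm).measurable
    (MeasurableSet.univ_pi fun i => measurableSet_Ioo)

lemma measurableSet_closedCube (x : E3) (r : ℝ) : MeasurableSet (closedCube x r) := by
  rw [closedCube_eq_preimage]
  exact ((MeasurableEquiv.toLp 2 (Fin 3 → ℝ)).symm).measurable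
    (MeasurableSet.univ_pi fun i => measurableSet_Icc)

lemma volume_cube (x : E3) (r : ℝ) :
    volume (cube x r) = ENNReal.ofReal (2*r) ^ 3 := by
  rw [cube_eq_preimage, (EuclideanSpace.volume_preserving_symm_measurableEquiv_toLp (Fin 3)).measure_preimage
    (MeasurableSet.univ_pi (fun i => measurableSet_Ioo)).nullMeasurableSet]
  rw [volume_pi_pi]
  simp [Real.volume_Ioo]
  congr 1
  ring_nf
  rw [ENNReal.ofReal_mul' (by norm_num)]
  simp

lemma volume_closedCube (x : E3) (r : ℝ) :
    volume (closedCube x r) = ENNReal.ofReal (2*r) ^ 3 := by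
  rw [closedCube_eq_preimage,
    (EuclideanSpace.volume_preserving_symm_measurableEquiv_toLp (Fin 3)).measure_preimage
    (MeasurableSet.univ_pi (fun i => measurableSet_Icc)).nullMeasurableSet]
  rw [volume_pi_pi]
  simp [Real.volume_Icc]
  congr 1
  ring_nf
  rw [ENNReal.ofReal_mul' (by norm_num)]
  simp

lemma volume_cube_ne_top (x : E3) (r : ℝ) : volume (cube x r) ≠ ⊤ := by
  rw [volume_cube]; exact ENNReal.pow_ne_top ENNReal.ofReal_ne_top

lemma volume_cube_toReal (x : E3) {r : ℝ} (hr : 0 ≤ r) :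
    (volume (cube x r)).toReal = (2*r)^3 := by
  rw [volume_cube, ENNReal.toReal_pow, ENNReal.toReal_ofReal (by linarith)]

lemma volume_cube_pos (x : E3) {r : ℝ} (hr : 0 < r) : 0 < (volume (cube x r)).toReal := by
  rw [volume_cube_toReal x hr.le]; positivity

lemma cube_subset_cube {a b : E3} {r R : ℝ} (h : ∀ i, |a i - b i| ≤ R - r) :
    cube a r ⊆ cube b R := by
  intro y hy i
  have h1 := hy i
  have h2 := h i
  have := abs_sub_abs_le_abs_sub (y i - b i) (y i - a i)
  have h3 : |y i - b i| ≤ |y i - a i| + |a i - b i| := by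
    calc |y i - b i| = |(y i - a i) + (a i - b i)| := by ring_nf
      _ ≤ |y i - a i| + |a i - b i| := abs_add_le _ _
  linarith

lemma norm_sub_le_of_forall {x y : E3} {D : ℝ} (hD : 0 ≤ D) (h : ∀ i, |y i - x i| ≤ D) :
    ‖y - x‖ ≤ 2 * D := by
  rw [EuclideanSpace.norm_eq]
  have hle : ∑ i, ‖(y - x) i‖ ^ 2 ≤ 3 * D ^ 2 := by
    have : ∀ i : Fin 3, ‖(y - x) i‖ ^ 2 ≤ D ^ 2 := by
      intro i
      have hi : (y - x) i = y i - x i := rfl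
      rw [hi, Real.norm_eq_abs, sq_abs]
      exact sq_le_sq' (by have := abs_le.1 (h i); linarith [this.1]) (abs_le.1 (h i)).2
    calc ∑ i, ‖(y - x) i‖ ^ 2 ≤ ∑ _i : Fin 3, D ^ 2 := Finset.sum_le_sum fun i _ => this i
      _ = 3 * D ^ 2 := by simp
  calc Real.sqrt (∑ i, ‖(y - x) i‖ ^ 2) ≤ Real.sqrt (3 * D ^ 2) := Real.sqrt_le_sqrt hle
    _ ≤ Real.sqrt ((2 * D) ^ 2) := Real.sqrt_le_sqrt (by nlinarith)
    _ = 2 * D := Real.sqrt_sq (by linarith)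

lemma cube_subset_closedBall (x : E3) {r : ℝ} (hr : 0 ≤ r) :
    cube x r ⊆ closedBall x (2 * r) := by
  intro y hy
  rw [mem_closedBall, dist_eq_norm]
  exact norm_sub_le_of_forall hr fun i => (hy i).le

lemma integrableOn_cube {u : E3 → ℝ} (hu : LocallyIntegrable u volume) (x : E3) {r : ℝ}
    (hr : 0 ≤ r) : IntegrableOn u (cube x r) volume :=
  (hu.integrableOn_isCompact (isCompact_closedBall x (2*r))).mono_set
    (cube_subset_closedBall x hr)


/-- Average of `u` over the open cube of radius `r` at `x`. -/
def Fa (u : E3 → ℝ) (x : E3) (r : ℝ) : ℝ := ⨍ z in cube x r, u z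

/-- Mean oscillation of `u` over the cube of radius `r` at `x`. -/
def osc (u : E3 → ℝ) (x : E3) (r : ℝ) : ℝ := ∫ y in cube x r, |u y - Fa u x r|

lemma osc_nonneg (u : E3 → ℝ) (x : E3) (r : ℝ) : 0 ≤ osc u x r :=
  setIntegral_nonneg (measurableSet_cube x r) fun _ _ => abs_nonneg _

variable {u : E3 → ℝ} (hu : LocallyIntegrable u volume)
include hu

lemma integrableOn_abs_sub (x : E3) {r : ℝ} (hr : 0 ≤ r) (c : ℝ) :
    IntegrableOn (fun z => |u z - c|) (cube x r) volume :=
  ((integrableOn_cube hu x hr).sub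
    (integrableOn_const (volume_cube_ne_top x r))).abs

lemma abs_avg_sub_le (x : E3) {r : ℝ} (hr : 0 < r) (c : ℝ) :
    |Fa u x r - c| ≤ (∫ z in cube x r, |u z - c|) / (2*r)^3 := by
  have hvol : (volume (cube x r)).toReal = (2*r)^3 := volume_cube_toReal x hr.le
  have hvpos : (0:ℝ) < (2*r)^3 := by positivity
  have hint : IntegrableOn u (cube x r) volume := integrableOn_cube hu x hr.le
  have hc : IntegrableOn (fun _ => c) (cube x r) volume :=
    integrableOn_const (volume_cube_ne_top x r)
  have h1 : Fa u x r - c = ((2*r)^3)⁻¹ * ∫ z in cube x r, (u z - c) := by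
    rw [Fa, setAverage_eq, measureReal_def, hvol, integral_sub hint hc, setIntegral_const, measureReal_def, hvol]
    simp only [smul_eq_mul]
    field_simp
  rw [h1, abs_mul, abs_inv, abs_of_pos hvpos, div_eq_inv_mul]
  gcongr
  calc |∫ z in cube x r, (u z - c)| ≤ ∫ z in cube x r, |u z - c| := by
        simpa [Real.norm_eq_abs] using
          norm_integral_le_integral_norm (μ := volume.restrict (cube x r)) (fun z => u z - c)
    _ ≤ _ := le_rfl

lemma integral_abs_sub_avg_le (x : E3) {r : ℝ} (hr : 0 < r) (c : ℝ) :
    osc u x r ≤ 2 * ∫ z in cube x r, |u z - c| := by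
  have hvol : (volume (cube x r)).toReal = (2*r)^3 := volume_cube_toReal x hr.le
  have hvpos : (0:ℝ) < (2*r)^3 := by positivity
  have h2 : osc u x r ≤ (∫ z in cube x r, |u z - c|) + (2*r)^3 * |Fa u x r - c| := by
    rw [osc]
    have hle : ∀ z, |u z - Fa u x r| ≤ |u z - c| + |c - Fa u x r| := fun z => by
      calc |u z - Fa u x r| = |(u z - c) + (c - Fa u x r)| := by ring_nf
        _ ≤ |u z - c| + |c - Fa u x r| := abs_add_le _ _
    calc ∫ z in cube x r, |u z - Fa u x r|
        ≤ ∫ z in cube x r, (|u z - c| + |c - Fa u x r|) := by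
          refine integral_mono ?_ ?_ hle
          · exact integrableOn_abs_sub hu x hr.le _
          · exact (integrableOn_abs_sub hu x hr.le c).add
              (integrableOn_const (volume_cube_ne_top x r))
      _ = (∫ z in cube x r, |u z - c|) + (2*r)^3 * |c - Fa u x r| := by
          rw [integral_add (integrableOn_abs_sub hu x hr.le c)
            (integrableOn_const (volume_cube_ne_top x r)),
            setIntegral_const, measureReal_def, hvol, smul_eq_mul]
      _ = (∫ z in cube x r, |u z - c|) + (2*r)^3 * |Fa u x r - c| := by rw [abs_sub_comm]
  have h3 := abs_avg_sub_le hu x hr c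
  calc osc u x r ≤ (∫ z in cube x r, |u z - c|) + (2*r)^3 * |Fa u x r - c| := h2
    _ ≤ (∫ z in cube x r, |u z - c|) + (2*r)^3 * ((∫ z in cube x r, |u z - c|) / (2*r)^3) := by
        gcongr
    _ = 2 * ∫ z in cube x r, |u z - c| := by field_simp; ring

omit hu in
lemma setIntegral_le_finset_sum {ι : Type*} [DecidableEq ι] (t : Finset ι) (S : ι → Set E3)
    (hS : ∀ i, MeasurableSet (S i)) (f : E3 → ℝ) (hf : ∀ z, 0 ≤ f z) :
    ∀ A : Set E3, MeasurableSet A → A ⊆ (⋃ i ∈ t, S i) → IntegrableOn f A volume →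
    (∀ i ∈ t, IntegrableOn f (S i) volume) →
    ∫ z in A, f z ≤ ∑ i ∈ t, ∫ z in S i, f z := by
  induction t using Finset.induction_on with
  | empty =>
    intro A _ hA _ _
    simp only [Finset.notMem_empty, Set.iUnion_of_empty, Set.iUnion_empty,
      Set.subset_empty_iff] at hA
    simp [hA]
  | insert a t ha ih =>
    intro A hAm hA hiA hiS
    have hsplit : A = (A ∩ S a) ∪ (A \ S a) := (Set.inter_union_diff A (S a)).symm
    have hdisj : Disjoint (A ∩ S a) (A \ S a) := by
      rw [Set.disjoint_left]; rintro z ⟨_, hz2⟩ ⟨_, hz4⟩; exact hz4 hz2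
    have hm2 : MeasurableSet (A \ S a) := hAm.diff (hS a)
    have hi1 : IntegrableOn f (A ∩ S a) volume := hiA.mono_set Set.inter_subset_left
    have hi2 : IntegrableOn f (A \ S a) volume := hiA.mono_set Set.diff_subset
    have hstep : ∫ z in A, f z = (∫ z in A ∩ S a, f z) + ∫ z in A \ S a, f z := by
      conv_lhs => rw [hsplit]
      exact setIntegral_union hdisj hm2 hi1 hi2
    rw [hstep, Finset.sum_insert ha]
    have hb1 : ∫ z in A ∩ S a, f z ≤ ∫ z in S a, f z :=
      setIntegral_mono_set (hiS a (Finset.mem_insert_self a t))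
        (Filter.Eventually.of_forall hf)
        (Filter.Eventually.of_forall (Set.inter_subset_right : A ∩ S a ⊆ S a))
    have hb2 : ∫ z in A \ S a, f z ≤ ∑ i ∈ t, ∫ z in S i, f z := by
      refine ih (A \ S a) hm2 ?_ hi2 (fun i hi => hiS i (Finset.mem_insert_of_mem hi))
      intro z hz
      have := hA hz.1
      simp only [Set.mem_iUnion] at this ⊢
      obtain ⟨i, hi, hzi⟩ := this
      rcases Finset.mem_insert.1 hi with rfl | hit
      · exact absurd hzi hz.2
      · exact ⟨i, hit, hzi⟩
    linarith

omit hu in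
lemma cube_ae_closedCube (x : E3) {s : ℝ} (hs : 0 < s) :
    cube x s =ᵐ[volume] closedCube x s := by
  refine ae_eq_of_subset_of_measure_ge ?_ ?_ ?_ ?_
  · intro y hy i; exact (hy i).le
  · rw [volume_cube, volume_closedCube]
  · exact (measurableSet_cube x s).nullMeasurableSet
  · rw [volume_closedCube]; exact ENNReal.pow_ne_top ENNReal.ofReal_ne_top

omit hu in
lemma setIntegral_closedCube_eq (f : E3 → ℝ) (x : E3) {s : ℝ} (hs : 0 < s) :
    ∫ z in closedCube x s, f z = ∫ z in cube x s, f z :=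
  (setIntegral_congr_set (cube_ae_closedCube x hs)).symm

/-- Sign vector for an octant. -/
def oct (b : Fin 3 → Bool) : E3 := WithLp.toLp 2 (fun i => if b i then (1:ℝ) else -1)

omit hu in
lemma oct_apply (b : Fin 3 → Bool) (i : Fin 3) : oct b i = if b i then (1:ℝ) else -1 := rfl

omit hu in
lemma abs_oct_apply (b : Fin 3 → Bool) (i : Fin 3) : |oct b i| = 1 := by
  rw [oct_apply]; split <;> simp

omit hu in
lemma add_smul_oct_apply (x : E3) (s : ℝ) (b : Fin 3 → Bool) (i : Fin 3) :
    (x + s • oct b) i = x i + s * oct b i := by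
  rw [PiLp.add_apply, PiLp.smul_apply, smul_eq_mul]

omit hu in
lemma cube_cover (x : E3) {s : ℝ} (hs : 0 < s) :
    cube x (2*s) ⊆ ⋃ b ∈ (Finset.univ : Finset (Fin 3 → Bool)), closedCube (x + s • oct b) s := by
  intro y hy
  simp only [Set.mem_iUnion]
  refine ⟨fun i => decide (x i ≤ y i), Finset.mem_univ _, ?_⟩
  intro i
  rw [add_smul_oct_apply, oct_apply]
  have h1 := abs_lt.1 (hy i)
  by_cases hxy : x i ≤ y i
  · have hb : decide (x i ≤ y i) = true := by simp [hxy]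
    simp only [hb]
    rw [abs_le]; constructor <;> simp <;> linarith [h1.1, h1.2]
  · have hb : decide (x i ≤ y i) = false := by simp [hxy]
    simp only [hb]
    push_neg at hxy
    rw [abs_le]; constructor <;> simp <;> linarith [h1.1, h1.2]

/-- Averages over two cubes of radius `s` which both contain a common cube of radius `s/2`
differ by at most the sum of oscillations divided by `s³`. -/
lemma abs_Fa_sub_Fa {s : ℝ} (hs : 0 < s) (a b m : E3)
    (hma : cube m (s/2) ⊆ cube a s) (hmb : cube m (s/2) ⊆ cube b s) :
    |Fa u a s - Fa u b s| ≤ (osc u a s + osc u b s) / s^3 := by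
  have hs2 : (0:ℝ) < s/2 := by linarith
  have key : ∀ c : E3, cube m (s/2) ⊆ cube c s →
      |Fa u m (s/2) - Fa u c s| ≤ osc u c s / s^3 := by
    intro c hsub
    have h1 := abs_avg_sub_le hu m hs2 (Fa u c s)
    have h2 : ∫ z in cube m (s/2), |u z - Fa u c s| ≤ osc u c s := by
      rw [osc]
      exact setIntegral_mono_set (integrableOn_abs_sub hu c hs.le _)
        (Filter.Eventually.of_forall fun z => abs_nonneg _)
        (Filter.Eventually.of_forall hsub)
    have h3 : (2*(s/2))^3 = s^3 := by ring
    rw [h3] at h1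
    calc |Fa u m (s/2) - Fa u c s| ≤ (∫ z in cube m (s/2), |u z - Fa u c s|) / s^3 := h1
      _ ≤ osc u c s / s^3 := by gcongr
  have ha := key a hma
  have hb := key b hmb
  calc |Fa u a s - Fa u b s|
      ≤ |Fa u m (s/2) - Fa u a s| + |Fa u m (s/2) - Fa u b s| := by
        rw [abs_sub_comm (Fa u m (s/2)) (Fa u a s)]
        exact abs_sub_le _ _ _ |>.trans_eq (by rw [abs_sub_comm]) |>.trans le_rfl
      _ ≤ osc u a s / s^3 + osc u b s / s^3 := by gcongr
      _ = (osc u a s + osc u b s) / s^3 := by ring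

lemma integral_abs_sub_le' (x : E3) {r : ℝ} (hr : 0 < r) (c : ℝ) :
    ∫ z in cube x r, |u z - c| ≤ osc u x r + (2*r)^3 * |Fa u x r - c| := by
  have hvol : (volume (cube x r)).toReal = (2*r)^3 := volume_cube_toReal x hr.le
  have hle : ∀ z, |u z - c| ≤ |u z - Fa u x r| + |Fa u x r - c| := fun z => by
    calc |u z - c| = |(u z - Fa u x r) + (Fa u x r - c)| := by ring_nf
      _ ≤ |u z - Fa u x r| + |Fa u x r - c| := abs_add_le _ _
  calc ∫ z in cube x r, |u z - c|
      ≤ ∫ z in cube x r, (|u z - Fa u x r| + |Fa u x r - c|) := by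
        refine integral_mono (integrableOn_abs_sub hu x hr.le c) ?_ hle
        exact (integrableOn_abs_sub hu x hr.le _).add
          (integrableOn_const (volume_cube_ne_top x r))
    _ = osc u x r + (2*r)^3 * |Fa u x r - c| := by
        rw [integral_add (integrableOn_abs_sub hu x hr.le _)
          (integrableOn_const (volume_cube_ne_top x r)),
          setIntegral_const, measureReal_def, hvol, smul_eq_mul, osc]

lemma osc_double (x : E3) {s : ℝ} (hs : 0 < s) {δ : ℝ}
    (hb : ∀ b : Fin 3 → Bool, osc u (x + s • oct b) s ≤ δ) (hx : osc u x s ≤ δ) :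
    osc u x (2*s) ≤ 272 * δ := by
  have hδ0 : 0 ≤ δ := (osc_nonneg u x s).trans hx
  set c := Fa u x s with hc
  have h2s : 0 < 2*s := by linarith
  have step1 : osc u x (2*s) ≤ 2 * ∫ z in cube x (2*s), |u z - c| :=
    integral_abs_sub_avg_le hu x h2s c
  have hfint : ∀ b : Fin 3 → Bool,
      IntegrableOn (fun z => |u z - c|) (closedCube (x + s • oct b) s) volume := by
    intro b
    refine (integrableOn_abs_sub hu (x + s • oct b) h2s.le c).mono_set ?_
    intro y hy i; exact lt_of_le_of_lt (hy i) (by linarith)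
  have step2 : ∫ z in cube x (2*s), |u z - c|
      ≤ ∑ b : Fin 3 → Bool, ∫ z in closedCube (x + s • oct b) s, |u z - c| :=
    setIntegral_le_finset_sum Finset.univ _ (fun b => measurableSet_closedCube _ _) _
      (fun z => abs_nonneg _) _ (measurableSet_cube x (2*s)) (cube_cover x hs)
      (integrableOn_abs_sub hu x h2s.le c) (fun b _ => hfint b)
  have hterm : ∀ b : Fin 3 → Bool,
      ∫ z in closedCube (x + s • oct b) s, |u z - c| ≤ 17 * δ := by
    intro b
    set a := x + s • oct b with hadef
    rw [setIntegral_closedCube_eq _ _ hs]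
    have hmid1 : cube (x + (s/2) • oct b) (s/2) ⊆ cube a s := by
      apply cube_subset_cube
      intro i
      rw [hadef, add_smul_oct_apply, add_smul_oct_apply]
      have he : x i + s/2 * oct b i - (x i + s * oct b i) = -(s/2) * oct b i := by ring
      rw [he, abs_mul, abs_neg, abs_of_pos (by linarith : (0:ℝ) < s/2), abs_oct_apply]
      linarith
    have hmid2 : cube (x + (s/2) • oct b) (s/2) ⊆ cube x s := by
      apply cube_subset_cube
      intro i
      rw [add_smul_oct_apply]
      have he : x i + s/2 * oct b i - x i = (s/2) * oct b i := by ring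
      rw [he, abs_mul, abs_of_pos (by linarith : (0:ℝ) < s/2), abs_oct_apply]
      linarith
    have hover : |Fa u a s - Fa u x s| ≤ (osc u a s + osc u x s) / s^3 :=
      abs_Fa_sub_Fa hu hs a x _ hmid1 hmid2
    have hkey := integral_abs_sub_le' hu a hs c
    have hosca : osc u a s ≤ δ := hb b
    have heq : (2*s)^3 * ((osc u a s + osc u x s) / s^3) = 8 * (osc u a s + osc u x s) := by
      field_simp; ring
    calc ∫ z in cube a s, |u z - c| ≤ osc u a s + (2*s)^3 * |Fa u a s - c| := hkey
      _ ≤ osc u a s + (2*s)^3 * ((osc u a s + osc u x s) / s^3) := by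
          gcongr
      _ = osc u a s + 8 * (osc u a s + osc u x s) := by rw [heq]
      _ ≤ 17 * δ := by linarith
  have hsum : ∑ b : Fin 3 → Bool, ∫ z in closedCube (x + s • oct b) s, |u z - c|
      ≤ 8 * (17 * δ) := by
    calc ∑ b : Fin 3 → Bool, ∫ z in closedCube (x + s • oct b) s, |u z - c|
        ≤ ∑ _b : Fin 3 → Bool, (17 * δ) := Finset.sum_le_sum fun b _ => hterm b
      _ = 8 * (17 * δ) := by
          rw [Finset.sum_const, Finset.card_univ]
          norm_num [Fintype.card_fun]
  linarith

lemma osc_pow (n : ℕ) (x0 : E3) {δ : ℝ}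
    (hδ : ∀ x : E3, (∀ i, |x i - x0 i| ≤ 2^(n+1)) → osc u x 1 ≤ δ) :
    ∀ j : ℕ, ∀ x : E3, (∀ i, |x i - x0 i| ≤ 2^(n+1) - 2^j) →
      osc u x ((2:ℝ)^j) ≤ 272^j * δ := by
  intro j
  induction j with
  | zero =>
    intro x hx
    simpa using hδ x fun i => (hx i).trans (by norm_num)
  | succ j ih =>
    intro x hx
    have hs : (0:ℝ) < 2^j := by positivity
    have hstepineq : (2:ℝ)^(j+1) = 2 * 2^j := by ring
    have hb : ∀ b : Fin 3 → Bool, osc u (x + (2:ℝ)^j • oct b) ((2:ℝ)^j) ≤ 272^j * δ := by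
      intro b
      apply ih
      intro i
      rw [add_smul_oct_apply]
      have he : x i + (2:ℝ)^j * oct b i - x0 i = (x i - x0 i) + 2^j * oct b i := by ring
      rw [he]
      calc |(x i - x0 i) + (2:ℝ)^j * oct b i| ≤ |x i - x0 i| + |(2:ℝ)^j * oct b i| :=
            abs_add_le _ _
        _ ≤ (2^(n+1) - 2^(j+1)) + 2^j := by
            have h1 := hx i
            rw [abs_mul, abs_oct_apply, abs_of_pos hs]
            linarith
        _ ≤ 2^(n+1) - 2^j := by
            have : (2:ℝ)^(j+1) = 2 * 2^j := by ring
            linarith [this]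
    have hx' : osc u x ((2:ℝ)^j) ≤ 272^j * δ := by
      apply ih
      intro i
      have h1 := hx i
      have h2 : (2:ℝ)^j ≤ 2^(j+1) := by
        have : (2:ℝ)^(j+1) = 2 * 2^j := by ring
        linarith
      linarith
    have hd := osc_double hu x hs hb hx'
    calc osc u x ((2:ℝ)^(j+1)) = osc u x (2 * 2^j) := by rw [hstepineq]
      _ ≤ 272 * (272^j * δ) := hd
      _ = 272^(j+1) * δ := by ring

end AvgDecay

open AvgDecay

/-- If `u ∈ L¹_uloc(ℝ³)` has decaying mean oscillation over unit cubes, then for every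
`r > 0` the averages of `u` over nearby cubes `Q_r(y)`, `y ∈ Q̄_{2r}(x₀)`, become uniformly
close to the average over `Q_r(x₀)` as `|x₀| → ∞`. -/
theorem average_nearby_cubes_decay
    (u : EuclideanSpace ℝ (Fin 3) → ℝ) (hu : LocallyIntegrable u volume)
    (huloc : ∃ M : ℝ, ∀ z : EuclideanSpace ℝ (Fin 3), ∫ y in ball z 1, |u y| ≤ M)
    (hosc : Tendsto (fun x0 : EuclideanSpace ℝ (Fin 3) =>
        ∫ y in cube x0 1, |u y - ⨍ z in cube x0 1, u z|)
      (cocompact (EuclideanSpace ℝ (Fin 3))) (nhds 0))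
    (r : ℝ) (hr : 0 < r) :
    ∀ ε > 0, ∃ ρ : ℝ, ∀ x0 : EuclideanSpace ℝ (Fin 3), ρ ≤ ‖x0‖ →
      ∀ y ∈ closedCube x0 (2 * r),
        |(⨍ z in cube y r, u z) - ⨍ z in cube x0 r, u z| < ε := by
  intro ε hε
  obtain ⟨m, hm⟩ := exists_nat_gt (3 * r)
  set n := m with hn
  have h2n : 3 * r ≤ (2:ℝ)^n := by
    have h1 : (m:ℝ) ≤ 2^m := by
      have := (Nat.lt_two_pow_self (n := m)).le
      exact_mod_cast this
    linarith
  set s := (2:ℝ)^n with hsdef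
  have hs : 0 < s := by positivity
  set δ := ε * (2*r)^3 / (4 * 272^n) with hδdef
  have hδpos : 0 < δ := by positivity
  have hosc' : ∀ᶠ x in cocompact (EuclideanSpace ℝ (Fin 3)),
      dist (∫ y in cube x 1, |u y - ⨍ z in cube x 1, u z|) 0 < δ :=
    Metric.tendsto_nhds.1 hosc δ hδpos
  obtain ⟨K, hK, hKsub⟩ := mem_cocompact.1 hosc'
  obtain ⟨R, hR⟩ := hK.isBounded.subset_closedBall 0
  refine ⟨R + 1 + 2 * 2^(n+1), ?_⟩
  intro x0 hx0 y hy
  -- all points in a cube of radius 2^{n+1} around x0 have small unit-scale oscillation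
  have hδb : ∀ x : EuclideanSpace ℝ (Fin 3), (∀ i, |x i - x0 i| ≤ 2^(n+1)) →
      osc u x 1 ≤ δ := by
    intro x hx
    have hnorm : ‖x - x0‖ ≤ 2 * 2^(n+1) :=
      norm_sub_le_of_forall (by positivity) hx
    have hxnorm : R < ‖x‖ := by
      have h1 : ‖x0‖ ≤ ‖x‖ + ‖x - x0‖ := by
        have hns := norm_sub_le x (x - x0)
        have he : x - (x - x0) = x0 := by abel
        rwa [he] at hns
      linarith
    have hxK : x ∉ K := by
      intro hxk
      have := hR hxk
      rw [mem_closedBall, dist_zero_right] at this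
      linarith
    have hmem := hKsub hxK
    have : dist (∫ y in cube x 1, |u y - ⨍ z in cube x 1, u z|) 0 < δ := hmem
    rw [Real.dist_eq, sub_zero] at this
    exact (le_abs_self _).trans this.le
  -- oscillation at scale s = 2^n is small
  have hosc_s : osc u x0 s ≤ 272^n * δ := by
    refine osc_pow hu n x0 hδb n x0 ?_
    intro i
    have h0 : |x0 i - x0 i| = 0 := by simp
    rw [h0]
    have : (2:ℝ)^(n+1) = 2 * 2^n := by ring
    rw [this]
    linarith [hs]
  -- both small cubes sit inside the big cube
  have hsub : ∀ w : EuclideanSpace ℝ (Fin 3), w ∈ closedCube x0 (2*r) →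
      cube w r ⊆ cube x0 s := by
    intro w hw
    apply cube_subset_cube
    intro i
    calc |w i - x0 i| ≤ 2*r := hw i
      _ ≤ s - r := by linarith
  have hbound : ∀ w : EuclideanSpace ℝ (Fin 3), w ∈ closedCube x0 (2*r) →
      |Fa u w r - Fa u x0 s| ≤ 272^n * δ / (2*r)^3 := by
    intro w hw
    have h1 := abs_avg_sub_le hu w hr (Fa u x0 s)
    have h2 : ∫ z in cube w r, |u z - Fa u x0 s| ≤ osc u x0 s := by
      rw [osc]
      exact setIntegral_mono_set (integrableOn_abs_sub hu x0 hs.le _)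
        (Filter.Eventually.of_forall fun z => abs_nonneg _)
        (Filter.Eventually.of_forall (hsub w hw))
    calc |Fa u w r - Fa u x0 s| ≤ (∫ z in cube w r, |u z - Fa u x0 s|) / (2*r)^3 := h1
      _ ≤ osc u x0 s / (2*r)^3 := by gcongr
      _ ≤ 272^n * δ / (2*r)^3 := by gcongr
  have hy0 : x0 ∈ closedCube x0 (2*r) := by
    intro i; simp; linarith
  have h1 := hbound y hy
  have h2 := hbound x0 hy0
  have htri : |Fa u y r - Fa u x0 r| ≤ 2 * (272^n * δ / (2*r)^3) := by
    calc |Fa u y r - Fa u x0 r|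
        ≤ |Fa u y r - Fa u x0 s| + |Fa u x0 r - Fa u x0 s| := by
          rw [abs_sub_comm (Fa u x0 r) (Fa u x0 s)]
          exact abs_sub_le _ _ _
      _ ≤ 2 * (272^n * δ / (2*r)^3) := by linarith
  have hfinal : 2 * (272^n * δ / (2*r)^3) = ε / 2 := by
    rw [hδdef]
    have h272 : (0:ℝ) < 272^n := by positivity
    field_simp
    ring
  have hgoal : |Fa u y r - Fa u x0 r| < ε := by
    rw [hfinal] at htri
    linarith
  exact hgoal
end
end

section
/- Fix $1 \le s < \infty$ and $1 \le p \le \infty$, times $0 \le t_0 < t$, and a sequence of points $x_k \in \mathbb{R}^3$ such that the balls $B_1(x_k)$ are pairwise disjoint. Let $t_k = t_0 + 2^{-k}$ and define $u(x,\tau) = 2^{k/s}$ for $(x,\tau) \in B_1(x_k) \times (t_0, t_k)$ and $u = 0$ otherwise. Then $u \in U^{s,p}(t_0,t)$ (i.e., $\sup_{x_0}\|u\|_{L^s(t_0,t;L^p(B_1(x_0)))} < \infty$), but $\int_{t_0}^{t_1} \|u(\cdot,\tau)\|_{L^p_{uloc}}^s\,d\tau = \infty$, so $u \notin L^s(t_0,t;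 L^p_{uloc})$. -/
open MeasureTheory Metric Filter ENNReal

noncomputable section

/-- Minkowski inequality for finite sums in `Lˢ` (lintegral form). -/
private lemma lp_sum_le {ι : Type*} (μ : Measure ℝ) {s : ℝ} (hs : 1 ≤ s)
    (h : ι → ℝ → ℝ≥0∞) (hm : ∀ k, AEMeasurable (h k) μ) (S : Finset ι) :
    (∫⁻ τ, (∑ k ∈ S, h k τ) ^ s ∂μ) ^ (1/s) ≤ ∑ k ∈ S, (∫⁻ τ, h k τ ^ s ∂μ) ^ (1/s) := by
  classical
  have hs0 : (0:ℝ) < s := lt_of_lt_of_le one_pos hs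
  induction S using Finset.induction with
  | empty =>
      simp [ENNReal.zero_rpow_of_pos, hs0, one_div_pos.mpr hs0]
  | @insert a S ha ih =>
      simp only [Finset.sum_insert ha]
      calc (∫⁻ τ, (h a τ + ∑ k ∈ S, h k τ) ^ s ∂μ) ^ (1/s)
          ≤ (∫⁻ τ, h a τ ^ s ∂μ) ^ (1/s)
            + (∫⁻ τ, (∑ k ∈ S, h k τ) ^ s ∂μ) ^ (1/s) :=
            ENNReal.lintegral_Lp_add_le (hm a)
              (Finset.aemeasurable_fun_sum S fun k _ => hm k) hs
        _ ≤ (∫⁻ τ, h a τ ^ s ∂μ) ^ (1/s)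
            + ∑ k ∈ S, (∫⁻ τ, h k τ ^ s ∂μ) ^ (1/s) := add_le_add_right ih _

/-- A function `u` which equals `2^{k/s}` on `B₁(x_k) × (t₀, t₀ + 2⁻ᵏ)` (for a sequence of
disjoint unit balls) and `0` elsewhere lies in `U^{s,p}(t₀,t)` but not in
`Lˢ(t₀,t;L^p_uloc)`: the inclusion `Lˢ(t₀,t;L^p_uloc) ⊂ U^{s,p}(t₀,t)` is strict. -/
theorem Usp_ne_Ls_Lp_uloc
    (s : ℝ) (hs : 1 ≤ s) (p : ℝ≥0∞) (hp : 1 ≤ p)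
    (t0 t : ℝ) (ht0 : 0 ≤ t0) (ht : t0 < t)
    (x : ℕ → EuclideanSpace ℝ (Fin 3))
    (hdisj : Pairwise fun k l => Disjoint (ball (x k) 1) (ball (x l) 1))
    (u : ℝ → EuclideanSpace ℝ (Fin 3) → ℝ)
    (hu1 : ∀ k : ℕ, 1 ≤ k → ∀ y ∈ ball (x k) 1,
      ∀ τ ∈ Set.Ioo t0 (t0 + 2 ^ (-(k : ℝ))), u τ y = 2 ^ ((k : ℝ) / s))
    (hu0 : ∀ (τ : ℝ) (y : EuclideanSpace ℝ (Fin 3)),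
      (¬ ∃ k : ℕ, 1 ≤ k ∧ y ∈ ball (x k) 1 ∧ τ ∈ Set.Ioo t0 (t0 + 2 ^ (-(k : ℝ)))) →
      u τ y = 0) :
    ((∫⁻ τ in Set.Ioo t0 (t0 + 2⁻¹),
        (⨆ x0 : EuclideanSpace ℝ (Fin 3),
          eLpNorm (u τ) p (volume.restrict (ball x0 1))) ^ s) = ⊤) ∧
    ∃ C : ℝ≥0∞, C ≠ ⊤ ∧ ∀ x0 : EuclideanSpace ℝ (Fin 3),
      (∫⁻ τ in Set.Ioo t0 t,
        (eLpNorm (u τ) p (volume.restrict (ball x0 1))) ^ s) ^ (1 / s) ≤ C := by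
  classical
  have hs0 : (0:ℝ) < s := lt_of_lt_of_le one_pos hs
  have hsne : s ≠ 0 := hs0.ne'
  have hp0 : p ≠ 0 := (lt_of_lt_of_le zero_lt_one hp).ne'
  set v : ℝ≥0∞ := volume (ball (0:EuclideanSpace ℝ (Fin 3)) 1) with hv
  have hv0 : 0 < v := measure_ball_pos _ _ one_pos
  have hvt : v < ⊤ := measure_ball_lt_top
  have hvb : ∀ z : EuclideanSpace ℝ (Fin 3), volume (ball z 1) = v := fun z => Measure.addHaar_ball_center _ z 1
  set V3 : ℝ≥0∞ := volume (ball (0:EuclideanSpace ℝ (Fin 3)) 3) with hV3def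
  have hV3 : V3 < ⊤ := measure_ball_lt_top
  set B : ℝ≥0∞ := v ^ p.toReal⁻¹ with hB
  have hB0 : 0 < B := ENNReal.rpow_pos hv0 hvt.ne
  have hBt : B < ⊤ := ENNReal.rpow_lt_top_of_nonneg (by positivity) hvt.ne
  have hBst : B ^ s ≠ ⊤ := (ENNReal.rpow_lt_top_of_nonneg hs0.le hBt.ne).ne
  constructor
  · -- Part 1: divergence
    set f : ℝ → ℝ≥0∞ := fun τ =>
      (⨆ x0 : EuclideanSpace ℝ (Fin 3), eLpNorm (u τ) p (volume.restrict (ball x0 1))) ^ s with hf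
    set J : ℕ → Set ℝ := fun n =>
      Set.Ioo (t0 + 2 ^ (-((n:ℝ)+2))) (t0 + 2 ^ (-((n:ℝ)+1))) with hJ
    have hJm : ∀ n, MeasurableSet (J n) := fun n => measurableSet_Ioo
    have hJd : Pairwise (Function.onFun Disjoint J) := by
      have key : ∀ m n : ℕ, m < n → Disjoint (J m) (J n) := by
        intro m n hmn
        refine Set.disjoint_left.2 fun τ hτm hτn => ?_
        have h1 : (2:ℝ) ^ (-((n:ℝ)+1)) ≤ 2 ^ (-((m:ℝ)+2)) := by
          apply Real.rpow_le_rpow_of_exponent_le (by norm_num)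
          have : (m:ℝ) + 1 ≤ (n:ℝ) := by exact_mod_cast hmn
          linarith
        have h2 := hτm.1
        have h3 := hτn.2
        linarith
      intro m n hmn
      rcases lt_or_gt_of_ne hmn with h | h
      · exact key m n h
      · exact (key n m h).symm
    have hJsub : ∀ n, J n ⊆ Set.Ioo t0 (t0 + 2⁻¹) := by
      intro n τ hτ
      have h1 : (0:ℝ) < 2 ^ (-((n:ℝ)+2)) := Real.rpow_pos_of_pos (by norm_num) _
      have h2 : (2:ℝ) ^ (-((n:ℝ)+1)) ≤ 2⁻¹ := by
        have : (2:ℝ) ^ (-((n:ℝ)+1)) ≤ 2 ^ (-1:ℝ) := by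
          apply Real.rpow_le_rpow_of_exponent_le (by norm_num)
          have : (0:ℝ) ≤ (n:ℝ) := Nat.cast_nonneg n
          linarith
        rw [Real.rpow_neg_one] at this
        exact this
      obtain ⟨hl, hr⟩ := hτ
      exact ⟨by linarith, by linarith⟩
    have hlow : ∀ n : ℕ, B ^ s * ENNReal.ofReal 2⁻¹ ≤ ∫⁻ τ in J n, f τ := by
      intro n
      set k : ℕ := n + 1 with hk
      have hk1 : 1 ≤ k := Nat.le_add_left 1 n
      have hkc : (k:ℝ) = (n:ℝ) + 1 := by rw [hk]; push_cast; ring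
      -- constant lower bound on J n
      have hτJ : ∀ τ ∈ J n, ENNReal.ofReal ((2:ℝ) ^ ((n:ℝ)+1)) * B ^ s ≤ f τ := by
        intro τ hτ
        have hτI : τ ∈ Set.Ioo t0 (t0 + 2 ^ (-(k:ℝ))) := by
          obtain ⟨hl, hr⟩ := hτ
          have h1 : (0:ℝ) < 2 ^ (-((n:ℝ)+2)) := Real.rpow_pos_of_pos (by norm_num) _
          constructor
          · linarith
          · rw [hkc]; exact hr
        have hcongr : u τ =ᵐ[volume.restrict (ball (x k) 1)]
            fun _ => (2:ℝ) ^ ((k:ℝ)/s) := by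
          rw [Filter.EventuallyEq, ae_restrict_iff' measurableSet_ball]
          exact ae_of_all _ fun y hy => hu1 k hk1 y hy τ hτI
        have hμne : volume.restrict (ball (x k) 1) ≠ 0 := by
          rw [Ne, Measure.restrict_eq_zero, hvb]
          exact hv0.ne'
        have heq : eLpNorm (u τ) p (volume.restrict (ball (x k) 1))
            = ENNReal.ofReal ((2:ℝ) ^ ((k:ℝ)/s)) * B := by
          rw [eLpNorm_congr_ae hcongr, eLpNorm_const _ hp0 hμne]
          congr 1
          · exact Real.enorm_eq_ofReal (Real.rpow_nonneg (by norm_num) _)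
          · rw [Measure.restrict_apply MeasurableSet.univ, Set.univ_inter, hvb, hB,
              one_div]
        have hle : ENNReal.ofReal ((2:ℝ) ^ ((k:ℝ)/s)) * B
            ≤ ⨆ x0 : EuclideanSpace ℝ (Fin 3), eLpNorm (u τ) p (volume.restrict (ball x0 1)) := by
          rw [← heq]
          exact le_iSup (fun x0 : EuclideanSpace ℝ (Fin 3) => eLpNorm (u τ) p (volume.restrict (ball x0 1))) (x k)
        calc ENNReal.ofReal ((2:ℝ) ^ ((n:ℝ)+1)) * B ^ s
            = (ENNReal.ofReal ((2:ℝ) ^ ((k:ℝ)/s)) * B) ^ s := by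
              rw [ENNReal.mul_rpow_of_nonneg _ _ hs0.le,
                ENNReal.ofReal_rpow_of_nonneg (Real.rpow_nonneg (by norm_num) _) hs0.le,
                ← Real.rpow_mul (by norm_num : (0:ℝ) ≤ 2), div_mul_cancel₀ _ hsne, hkc]
          _ ≤ f τ := ENNReal.rpow_le_rpow hle hs0.le
      have hvol : volume (J n) = ENNReal.ofReal ((2:ℝ) ^ (-((n:ℝ)+2))) := by
        rw [hJ, Real.volume_Ioo]
        congr 1
        have : (2:ℝ) ^ (-((n:ℝ)+1)) = 2 ^ (-((n:ℝ)+2)) * 2 := by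
          rw [← Real.rpow_add_one (by norm_num : (2:ℝ) ≠ 0)]
          ring_nf
        linarith [this]
      have hmul : ENNReal.ofReal ((2:ℝ) ^ ((n:ℝ)+1)) * ENNReal.ofReal ((2:ℝ) ^ (-((n:ℝ)+2)))
          = ENNReal.ofReal 2⁻¹ := by
        rw [← ENNReal.ofReal_mul (Real.rpow_nonneg (by norm_num) _),
          ← Real.rpow_add (by norm_num : (0:ℝ) < 2),
          show ((n:ℝ)+1) + -((n:ℝ)+2) = (-1:ℝ) by ring, Real.rpow_neg_one]
      calc B ^ s * ENNReal.ofReal 2⁻¹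
          = (ENNReal.ofReal ((2:ℝ) ^ ((n:ℝ)+1)) * B ^ s) * volume (J n) := by
            rw [hvol, ← hmul]; ring
        _ = ∫⁻ _ in J n, (ENNReal.ofReal ((2:ℝ) ^ ((n:ℝ)+1)) * B ^ s) := by
            rw [setLIntegral_const]
        _ ≤ ∫⁻ τ in J n, f τ := setLIntegral_mono' (hJm n) fun τ hτ => hτJ τ hτ
    have hc0 : (B ^ s * ENNReal.ofReal 2⁻¹ : ℝ≥0∞) ≠ 0 := by
      apply mul_ne_zero
      · exact (ENNReal.rpow_pos hB0 hBt.ne).ne'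
      · simp
    rw [eq_top_iff]
    calc (⊤ : ℝ≥0∞) = ∑' _ : ℕ, (B ^ s * ENNReal.ofReal 2⁻¹) :=
          (ENNReal.tsum_const_eq_top_of_ne_zero hc0).symm
      _ ≤ ∑' n : ℕ, ∫⁻ τ in J n, f τ := ENNReal.tsum_le_tsum hlow
      _ = ∫⁻ τ in ⋃ n, J n, f τ := (lintegral_iUnion hJm hJd f).symm
      _ ≤ ∫⁻ τ in Set.Ioo t0 (t0 + 2⁻¹), f τ :=
          lintegral_mono_set (Set.iUnion_subset hJsub)
  · -- Part 2: uniform bound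
    refine ⟨B * (V3 / v), ENNReal.mul_ne_top hBt.ne
      (ENNReal.div_lt_top hV3.ne hv0.ne').ne, fun x0 => ?_⟩
    set T : Set ℕ := {k | 1 ≤ k ∧ ¬ Disjoint (ball (x k) 1) (ball x0 1)} with hT
    have hpack : ∀ F : Finset ℕ, ↑F ⊆ T → (F.card : ℝ≥0∞) ≤ V3 / v := by
      intro F hF
      rw [ENNReal.le_div_iff_mul_le (Or.inl hv0.ne') (Or.inl hvt.ne)]
      have h1 : ∀ k ∈ F, ball (x k) 1 ⊆ ball x0 3 := by
        intro k hk
        obtain ⟨-, hnd⟩ := hF hk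
        obtain ⟨z, hz1, hz2⟩ := Set.not_disjoint_iff.1 hnd
        apply ball_subset_ball'
        have h3 : dist (x k) x0 ≤ dist (x k) z + dist z x0 := dist_triangle _ _ _
        have hz1' : dist z (x k) < 1 := mem_ball.1 hz1
        have hz2' : dist z x0 < 1 := mem_ball.1 hz2
        rw [dist_comm] at hz1'
        linarith
      calc (F.card : ℝ≥0∞) * v = ∑ k ∈ F, volume (ball (x k) 1) := by
            simp [hvb, Finset.sum_const, nsmul_eq_mul]
        _ = volume (⋃ k ∈ F, ball (x k) 1) :=
            (measure_biUnion_finset (fun k _ l _ hkl => hdisj hkl)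
              (fun _ _ => measurableSet_ball)).symm
        _ ≤ volume (ball x0 3) := measure_mono (Set.iUnion₂_subset h1)
        _ = V3 := Measure.addHaar_ball_center _ _ _
    have hTfin : T.Finite := by
      by_contra hinf
      obtain ⟨n, hn⟩ := ENNReal.exists_nat_gt (ENNReal.div_lt_top hV3.ne hv0.ne').ne
      obtain ⟨F, hFsub, hFcard⟩ := (Set.Infinite.exists_subset_card_eq hinf n)
      have := hpack F hFsub
      rw [hFcard] at this
      exact lt_irrefl _ (this.trans_lt hn)
    set S : Finset ℕ := hTfin.toFinset with hSdef
    set h : ℕ → ℝ → ℝ≥0∞ := fun k =>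
      (Set.Ioo t0 (t0 + 2 ^ (-(k:ℝ)))).indicator
        (fun _ => ENNReal.ofReal ((2:ℝ) ^ ((k:ℝ)/s))) with hhdef
    have hhm : ∀ k, AEMeasurable (h k) (volume.restrict (Set.Ioo t0 t)) :=
      fun k => (measurable_const.indicator measurableSet_Ioo).aemeasurable
    -- pointwise bound on the eLpNorm
    have hbound : ∀ τ : ℝ,
        eLpNorm (u τ) p (volume.restrict (ball x0 1)) ≤ B * ∑ k ∈ S, h k τ := by
      intro τ
      set F : ℝ := ∑ k ∈ S,
        (Set.Ioo t0 (t0 + 2 ^ (-(k:ℝ)))).indicator (fun _ => (2:ℝ) ^ ((k:ℝ)/s)) τ with hFdef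
      have hFnonneg : ∀ k ∈ S, 0 ≤
          (Set.Ioo t0 (t0 + 2 ^ (-(k:ℝ)))).indicator (fun _ => (2:ℝ) ^ ((k:ℝ)/s)) τ :=
        fun k _ => Set.indicator_nonneg (fun _ _ => Real.rpow_nonneg (by norm_num) _) τ
      have hae : ∀ᵐ y ∂(volume.restrict (ball x0 1)), ‖u τ y‖ ≤ F := by
        rw [ae_restrict_iff' measurableSet_ball]
        refine ae_of_all _ fun y hy => ?_
        by_cases hex : ∃ k : ℕ, 1 ≤ k ∧ y ∈ ball (x k) 1 ∧
            τ ∈ Set.Ioo t0 (t0 + 2 ^ (-(k : ℝ)))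
        · obtain ⟨k, hk1, hyk, hτk⟩ := hex
          have hval : u τ y = 2 ^ ((k:ℝ)/s) := hu1 k hk1 y hyk τ hτk
          have hkS : k ∈ S := by
            rw [hSdef, Set.Finite.mem_toFinset]
            exact ⟨hk1, Set.not_disjoint_iff.2 ⟨y, hyk, hy⟩⟩
          have hterm : (Set.Ioo t0 (t0 + 2 ^ (-(k:ℝ)))).indicator
              (fun _ => (2:ℝ) ^ ((k:ℝ)/s)) τ = 2 ^ ((k:ℝ)/s) :=
            Set.indicator_of_mem hτk _
          rw [hval, Real.norm_of_nonneg (Real.rpow_nonneg (by norm_num) _)]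
          calc (2:ℝ) ^ ((k:ℝ)/s) = _ := hterm.symm
            _ ≤ F := Finset.single_le_sum hFnonneg hkS
        · rw [hu0 τ y hex, norm_zero]
          exact Finset.sum_nonneg hFnonneg
      have h1 := eLpNorm_le_of_ae_bound (p := p) hae
      rw [Measure.restrict_apply MeasurableSet.univ, Set.univ_inter, hvb] at h1
      refine h1.trans ?_
      rw [← hB]
      gcongr
      rw [hFdef, ENNReal.ofReal_sum_of_nonneg hFnonneg]
      apply Finset.sum_le_sum
      intro k _
      by_cases hτ : τ ∈ Set.Ioo t0 (t0 + 2 ^ (-(k:ℝ))) <;>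
        simp only [hhdef, Set.indicator_apply, hτ, if_true, if_false] <;> simp
    have hterm_le : ∀ k : ℕ,
        (∫⁻ τ in Set.Ioo t0 t, h k τ ^ s) ^ (1/s) ≤ 1 := by
      intro k
      have hind : ∀ τ : ℝ, h k τ ^ s = (Set.Ioo t0 (t0 + 2 ^ (-(k:ℝ)))).indicator
          (fun _ => ENNReal.ofReal ((2:ℝ) ^ ((k:ℝ)/s)) ^ s) τ := by
        intro τ
        by_cases hτ : τ ∈ Set.Ioo t0 (t0 + 2 ^ (-(k:ℝ))) <;>
          simp only [hhdef, Set.indicator_apply, hτ, if_true, if_false] <;>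
            simp [ENNReal.zero_rpow_of_pos hs0]
      have hc : ENNReal.ofReal ((2:ℝ) ^ ((k:ℝ)/s)) ^ s = ENNReal.ofReal ((2:ℝ) ^ (k:ℝ)) := by
        rw [ENNReal.ofReal_rpow_of_nonneg (Real.rpow_nonneg (by norm_num) _) hs0.le,
          ← Real.rpow_mul (by norm_num : (0:ℝ) ≤ 2), div_mul_cancel₀ _ hsne]
      have hint : (∫⁻ τ in Set.Ioo t0 t, h k τ ^ s) ≤ 1 := by
        simp_rw [hind]
        rw [lintegral_indicator measurableSet_Ioo, setLIntegral_const, hc]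
        calc ENNReal.ofReal ((2:ℝ) ^ (k:ℝ)) *
            (volume.restrict (Set.Ioo t0 t)) (Set.Ioo t0 (t0 + 2 ^ (-(k:ℝ))))
            ≤ ENNReal.ofReal ((2:ℝ) ^ (k:ℝ)) * volume (Set.Ioo t0 (t0 + 2 ^ (-(k:ℝ)))) := by
              gcongr
              exact Measure.restrict_le_self
          _ = 1 := by
              rw [Real.volume_Ioo, add_sub_cancel_left,
                ← ENNReal.ofReal_mul (Real.rpow_nonneg (by norm_num) _),
                ← Real.rpow_add (by norm_num : (0:ℝ) < 2), add_neg_cancel, Real.rpow_zero,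
                ENNReal.ofReal_one]
      calc (∫⁻ τ in Set.Ioo t0 t, h k τ ^ s) ^ (1/s)
          ≤ (1:ℝ≥0∞) ^ (1/s) := ENNReal.rpow_le_rpow hint (by positivity)
        _ = 1 := ENNReal.one_rpow _
    calc (∫⁻ τ in Set.Ioo t0 t, (eLpNorm (u τ) p (volume.restrict (ball x0 1))) ^ s) ^ (1/s)
        ≤ (∫⁻ τ in Set.Ioo t0 t, (B * ∑ k ∈ S, h k τ) ^ s) ^ (1/s) := by
          apply ENNReal.rpow_le_rpow _ (by positivity)
          exact lintegral_mono fun τ => ENNReal.rpow_le_rpow (hbound τ) hs0.le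
      _ = B * (∫⁻ τ in Set.Ioo t0 t, (∑ k ∈ S, h k τ) ^ s) ^ (1/s) := by
          simp_rw [ENNReal.mul_rpow_of_nonneg _ _ hs0.le]
          rw [lintegral_const_mul' _ _ hBst,
            ENNReal.mul_rpow_of_nonneg _ _ (by positivity : (0:ℝ) ≤ 1/s),
            ← ENNReal.rpow_mul, mul_one_div, div_self hsne, ENNReal.rpow_one]
      _ ≤ B * ∑ k ∈ S, (∫⁻ τ in Set.Ioo t0 t, h k τ ^ s) ^ (1/s) := by
          gcongr
          exact lp_sum_le _ hs h hhm S
      _ ≤ B * ∑ _k ∈ S, (1:ℝ≥0∞) := by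
          gcongr with k hk
          exact hterm_le k
      _ = B * S.card := by simp
      _ ≤ B * (V3 / v) := by
          gcongr
          exact hpack S (by rw [hSdef, Set.Finite.coe_toFinset])
end
end
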